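/- Let k ≥ 4 be an even integer and j ≥ 0 an integer, and define Ψ : ℝ → ℝ as the j-th iterated derivative of the function x ↦ Γ'(x)/Γ(x) − Γ'(k−x)/Γ(k−x), where Γ is the real Gamma function and Γ' its derivative. Then Ψ(s) > 0 for every s with k/2 < s ≤ k−2, Ψ(k/2) ≥ 0, and Ψ is strictly increasing on the interval [k/2, k−2]. -/

import Mathlib

open Set Filter Topology

noncomputable def psiTerm (K : ℝ) (j i : ℕ) (x : ℝ) : ℝ :=
  (j.factorial : ℝ) * (1 / (K - x + i) ^ (j + 1) - (-1 : ℝ) ^ j / (x + i) ^ (j + 1))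

noncomputable def psiSeries (K : ℝ) (j : ℕ) (x : ℝ) : ℝ := ∑' i : ℕ, psiTerm K j i x

lemma psiTerm_hasDerivAt {K x : ℝ} (hx : 0 < x) (hx' : x < K) (j i : ℕ) :
    HasDerivAt (fun y => psiTerm K j i y) (psiTerm K (j + 1) i x) x := by
  have hi : (0 : ℝ) ≤ i := Nat.cast_nonneg i
  have hA : (0 : ℝ) < K - x + i := by linarith
  have hB : (0 : ℝ) < x + i := by linarith
  have h1 : HasDerivAt (fun y : ℝ => K - y + i) (-1) x := by
    simpa using ((hasDerivAt_id x).const_sub K).add_const (i : ℝ)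
  have h2 : HasDerivAt (fun y : ℝ => (K - y + i) ^ (j + 1))
      ((j + 1 : ℕ) * (K - x + i) ^ j * (-1)) x := by
    simpa using h1.fun_pow (j + 1)
  have h3 : HasDerivAt (fun y : ℝ => ((K - y + i) ^ (j + 1))⁻¹)
      (-((j + 1 : ℕ) * (K - x + i) ^ j * (-1)) / ((K - x + i) ^ (j + 1)) ^ 2) x :=
    h2.inv (pow_ne_zero _ hA.ne')
  have h4 : HasDerivAt (fun y : ℝ => y + i) 1 x := by
    simpa using (hasDerivAt_id x).add_const (i : ℝ)
  have h5 : HasDerivAt (fun y : ℝ => (y + i) ^ (j + 1))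
      ((j + 1 : ℕ) * (x + i) ^ j * 1) x := by
    simpa using h4.fun_pow (j + 1)
  have h6 : HasDerivAt (fun y : ℝ => ((y + i) ^ (j + 1))⁻¹)
      (-((j + 1 : ℕ) * (x + i) ^ j * 1) / ((x + i) ^ (j + 1)) ^ 2) x :=
    h5.inv (pow_ne_zero _ hB.ne')
  have h7 := ((h3.const_mul (j.factorial : ℝ)).fun_sub
    (h6.const_mul ((j.factorial : ℝ) * (-1 : ℝ) ^ j)))
  have heq : (fun y => psiTerm K j i y) = fun y =>
      (j.factorial : ℝ) * ((K - y + i) ^ (j + 1))⁻¹ -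
        ((j.factorial : ℝ) * (-1 : ℝ) ^ j) * ((y + i) ^ (j + 1))⁻¹ := by
    funext y; simp [psiTerm]; ring
  rw [heq]
  refine h7.congr_deriv ?_
  simp only [psiTerm, Nat.factorial_succ, pow_succ]
  push_cast
  field_simp

lemma summable_aux {c : ℝ} (hc : 0 < c) : Summable (fun i : ℕ => 1 / (c + i) ^ 2) := by
  have base : Summable (fun i : ℕ => 1 / ((i : ℝ) + 1) ^ 2) := by
    have h2 : Summable (fun i : ℕ => 1 / (i : ℝ) ^ 2) :=
      Real.summable_one_div_nat_pow.mpr one_lt_two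
    have := (summable_nat_add_iff 1).mpr h2
    simpa using this
  have hd : (0 : ℝ) < (1 + c⁻¹) ^ 2 := by positivity
  refine Summable.of_nonneg_of_le (fun i => by positivity) (fun i => ?_)
    (base.mul_left ((1 + c⁻¹) ^ 2))
  have hi : (0 : ℝ) ≤ i := Nat.cast_nonneg i
  have hlin : (i : ℝ) + 1 ≤ (1 + c⁻¹) * (c + i) := by
    have h1 : c * c⁻¹ = 1 := mul_inv_cancel₀ hc.ne'
    have h2 : (0 : ℝ) ≤ c⁻¹ * i := by positivity
    nlinarith
  have hsq : ((i : ℝ) + 1) ^ 2 ≤ ((1 + c⁻¹) * (c + i)) ^ 2 :=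
    pow_le_pow_left₀ (by linarith) hlin 2
  rw [mul_one_div, div_le_div_iff₀ (by positivity) (by positivity), one_mul]
  calc ((i:ℝ)+1)^2 ≤ ((1 + c⁻¹) * (c + i)) ^ 2 := hsq
    _ = (1 + c⁻¹) ^ 2 * (c + i) ^ 2 := by ring

lemma psiTerm_bound {K a b : ℝ} (ha : 0 < a) (hb : b < K) (j : ℕ) :
    ∃ C : ℝ, ∀ x ∈ Icc a b, ∀ i : ℕ, |psiTerm K j i x| ≤ C / (min a (K - b) + i) ^ 2 := by
  set ε := min a (K - b) with hε
  have hε0 : 0 < ε := lt_min ha (by linarith)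
  have key : ∀ x ∈ Icc a b, ∀ i : ℕ, 0 < ε + i ∧ ε + i ≤ K - x + i ∧ ε + i ≤ x + i := by
    intro x hx i
    have hi : (0 : ℝ) ≤ i := Nat.cast_nonneg i
    refine ⟨by linarith, ?_, ?_⟩
    · have : ε ≤ K - b := min_le_right _ _
      have := hx.2; linarith
    · have : ε ≤ a := min_le_left _ _
      have := hx.1; linarith
  rcases Nat.eq_zero_or_pos j with hj | hj
  · subst hj
    refine ⟨K, fun x hx i => ?_⟩
    obtain ⟨h1, h2, h3⟩ := key x hx i
    have hA : (0:ℝ) < K - x + i := lt_of_lt_of_le h1 h2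
    have hB : (0:ℝ) < x + i := lt_of_lt_of_le h1 h3
    have heq : psiTerm K 0 i x = (2 * x - K) / ((K - x + i) * (x + i)) := by
      simp only [psiTerm]
      field_simp
      ring
    have hprod : (0:ℝ) < (K - x + i) * (x + i) := mul_pos hA hB
    rw [heq, abs_div, abs_of_pos hprod]
    have habs : |2 * x - K| ≤ K := by
      have h4 := hx.1; have h5 := hx.2
      rw [abs_le]; constructor <;> linarith
    have hK0 : (0:ℝ) < K := by linarith
    have hstep : (ε + (i:ℝ)) ^ 2 ≤ (K - x + i) * (x + i) := by
      have : (ε + (i:ℝ)) ^ 2 = (ε + i) * (ε + i) := by ring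
      rw [this]
      exact mul_le_mul h2 h3 h1.le hA.le
    calc |2*x - K| / ((K - x + i) * (x + i)) ≤ K / ((K - x + i) * (x + i)) := by
          gcongr
        _ ≤ K / (ε + i) ^ 2 := by
          gcongr
  · refine ⟨2 * j.factorial / ε ^ (j - 1), fun x hx i => ?_⟩
    obtain ⟨h1, h2, h3⟩ := key x hx i
    have hA : (0:ℝ) < K - x + i := lt_of_lt_of_le h1 h2
    have hB : (0:ℝ) < x + i := lt_of_lt_of_le h1 h3
    have hb1 : |psiTerm K j i x| ≤ 2 * j.factorial / (ε + i) ^ (j + 1) := by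
      have e1 : |1 / (K - x + i) ^ (j+1)| ≤ 1 / (ε + i) ^ (j+1) := by
        rw [abs_of_pos (by positivity)]
        exact one_div_le_one_div_of_le (by positivity) (pow_le_pow_left₀ h1.le h2 _)
      have e2 : |(-1:ℝ)^j / (x + i) ^ (j+1)| ≤ 1 / (ε + i) ^ (j+1) := by
        rw [abs_div, abs_pow, abs_neg, abs_one, one_pow]
        rw [abs_of_pos (by positivity)]
        exact one_div_le_one_div_of_le (by positivity) (pow_le_pow_left₀ h1.le h3 _)
      have habs : |1 / (K - x + i) ^ (j+1) - (-1:ℝ)^j / (x + i) ^ (j+1)| ≤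
          1 / (ε + i) ^ (j+1) + 1 / (ε + i) ^ (j+1) :=
        (abs_sub _ _).trans (add_le_add e1 e2)
      calc |psiTerm K j i x|
          = (j.factorial : ℝ) * |1 / (K - x + i) ^ (j+1) - (-1:ℝ)^j / (x + i) ^ (j+1)| := by
            rw [psiTerm, abs_mul, abs_of_nonneg (by positivity : (0:ℝ) ≤ (j.factorial:ℝ))]
        _ ≤ (j.factorial : ℝ) * (1 / (ε + i) ^ (j+1) + 1 / (ε + i) ^ (j+1)) :=
            mul_le_mul_of_nonneg_left habs (by positivity)
        _ = 2 * j.factorial / (ε + i) ^ (j + 1) := by ring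
    refine hb1.trans ?_
    have hpow : (ε + i) ^ (j + 1) = (ε + i) ^ 2 * (ε + i) ^ (j - 1) := by
      rw [← pow_add]; congr 1; omega
    have hle : ε ^ (j - 1) ≤ (ε + i) ^ (j - 1) :=
      pow_le_pow_left₀ hε0.le (by linarith [Nat.cast_nonneg (α := ℝ) i]) _
    calc 2 * (j.factorial:ℝ) / (ε + i) ^ (j + 1)
        = 2 * (j.factorial:ℝ) / ((ε + i) ^ 2 * (ε + i) ^ (j - 1)) := by rw [hpow]
      _ ≤ 2 * (j.factorial:ℝ) / ((ε + i) ^ 2 * ε ^ (j - 1)) := by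
          gcongr
      _ = 2 * (j.factorial:ℝ) / ε ^ (j - 1) / (ε + i) ^ 2 := by
          rw [div_div, mul_comm ((ε + (i:ℝ)) ^ 2) (ε ^ (j-1))]

lemma summable_psiTerm {K x : ℝ} (hx : x ∈ Ioo 0 K) (j : ℕ) :
    Summable (fun i => psiTerm K j i x) := by
  obtain ⟨C, hC⟩ := psiTerm_bound (K := K) hx.1 hx.2 j
  have hε : 0 < min x (K - x) := lt_min hx.1 (by linarith [hx.2])
  refine Summable.of_abs (Summable.of_nonneg_of_le (fun i => abs_nonneg _)
    (fun i => hC x ⟨le_refl x, le_refl x⟩ i) ?_)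
  have := (summable_aux hε).mul_left C
  simpa only [mul_one_div] using this

lemma ball_subset_aux {K x₀ : ℝ} (hx : x₀ ∈ Ioo 0 K) :
    ∃ a b : ℝ, 0 < a ∧ b < K ∧ x₀ ∈ Ioo a b ∧ Ioo a b ⊆ Icc a b ∧ Ioo a b ⊆ Ioo 0 K := by
  obtain ⟨h0, h1⟩ := hx
  refine ⟨x₀ / 2, (x₀ + K) / 2, by linarith, by linarith, ⟨by linarith, by linarith⟩,
    Ioo_subset_Icc_self, fun y hy => ⟨by linarith [hy.1], by linarith [hy.2]⟩⟩

lemma tendstoUniformlyOn_psiPartial {K a b : ℝ} (ha : 0 < a) (hb : b < K) (j : ℕ) :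
    TendstoUniformlyOn (fun N x => ∑ i ∈ Finset.range N, psiTerm K j i x)
      (psiSeries K j) atTop (Ioo a b) := by
  obtain ⟨C, hC⟩ := psiTerm_bound (K := K) ha hb j
  have hε : 0 < min a (K - b) := lt_min ha (by linarith)
  have hu : Summable (fun i : ℕ => C / (min a (K - b) + i) ^ 2) := by
    have := (summable_aux hε).mul_left C
    simpa only [mul_one_div] using this
  exact tendstoUniformlyOn_tsum_nat hu
    (fun i x hx => hC x (Ioo_subset_Icc_self hx) i)

lemma hasDerivAt_psiSeries {K x₀ : ℝ} (hx : x₀ ∈ Ioo 0 K) (j : ℕ) :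
    HasDerivAt (psiSeries K j) (psiSeries K (j + 1) x₀) x₀ := by
  obtain ⟨a, b, ha, hb, hx₀, hsub1, hsub2⟩ := ball_subset_aux hx
  refine hasDerivAt_of_tendstoUniformlyOn (f := fun N x => ∑ i ∈ Finset.range N, psiTerm K j i x)
    isOpen_Ioo (tendstoUniformlyOn_psiPartial ha hb (j + 1)) ?_ ?_ hx₀
  · refine Eventually.of_forall fun N x hxm => ?_
    exact HasDerivAt.fun_sum fun i _ =>
      psiTerm_hasDerivAt (hsub2 hxm).1 (hsub2 hxm).2 j i
  · intro x hxm
    exact (summable_psiTerm (hsub2 hxm) j).hasSum.tendsto_sum_nat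

lemma log_GammaSeq {s : ℝ} (hs : 0 < s) {n : ℕ} (hn : 1 ≤ n) :
    Real.log (Real.GammaSeq s n) = s * Real.log n + Real.log (n.factorial) -
      ∑ i ∈ Finset.range (n + 1), Real.log (s + i) := by
  have hn0 : (0 : ℝ) < n := by exact_mod_cast hn
  have hterm : ∀ i ∈ Finset.range (n + 1), (s + (i : ℝ)) ≠ 0 := by
    intro i _
    have : (0:ℝ) ≤ i := Nat.cast_nonneg i
    positivity
  have hprod : (0 : ℝ) < ∏ i ∈ Finset.range (n + 1), (s + i) :=
    Finset.prod_pos fun i _ => by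
      have : (0:ℝ) ≤ i := Nat.cast_nonneg i; positivity
  have hfac : (0 : ℝ) < (n.factorial : ℝ) := by exact_mod_cast n.factorial_pos
  have hrpow : (0 : ℝ) < (n : ℝ) ^ s := Real.rpow_pos_of_pos hn0 s
  rw [Real.GammaSeq, Real.log_div (by positivity) hprod.ne', Real.log_mul hrpow.ne' hfac.ne',
    Real.log_rpow hn0, Real.log_prod hterm]

lemma psi_eq_series {K : ℝ} {x : ℝ} (hx : x ∈ Ioo 0 K) :
    deriv Real.Gamma x / Real.Gamma x - deriv Real.Gamma (K - x) / Real.Gamma (K - x) =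
      psiSeries K 0 x := by
  have hK : 0 < K := lt_trans hx.1 hx.2
  -- the auxiliary function h
  set h : ℝ → ℝ := fun y => Real.log (Real.Gamma y) + Real.log (Real.Gamma (K - y)) with hh
  -- Step 1: h has derivative the LHS at any point of Ioo 0 K
  have step1 : ∀ y ∈ Ioo (0:ℝ) K, HasDerivAt h
      (deriv Real.Gamma y / Real.Gamma y - deriv Real.Gamma (K - y) / Real.Gamma (K - y)) y := by
    intro y hy
    have hy0 : 0 < y := hy.1
    have hyK : 0 < K - y := by linarith [hy.2]
    have hΓ1 : 0 < Real.Gamma y := Real.Gamma_pos_of_pos hy0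
    have hΓ2 : 0 < Real.Gamma (K - y) := Real.Gamma_pos_of_pos hyK
    have hd1 : HasDerivAt Real.Gamma (deriv Real.Gamma y) y :=
      (Real.differentiableAt_Gamma (fun m => by
        have : (0:ℝ) ≤ m := Nat.cast_nonneg m
        intro hc; rw [hc] at hy0; linarith)).hasDerivAt
    have hd2 : HasDerivAt Real.Gamma (deriv Real.Gamma (K - y)) (K - y) :=
      (Real.differentiableAt_Gamma (fun m => by
        have : (0:ℝ) ≤ m := Nat.cast_nonneg m
        intro hc; rw [hc] at hyK; linarith)).hasDerivAt
    have hu : HasDerivAt (fun z : ℝ => K - z) (-1) y := by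
      simpa using ((hasDerivAt_id y).const_sub K)
    have hc2 : HasDerivAt (fun z : ℝ => Real.Gamma (K - z)) (deriv Real.Gamma (K - y) * (-1)) y :=
      hd2.comp y hu
    have hl1 : HasDerivAt (fun z : ℝ => Real.log (Real.Gamma z))
        ((Real.Gamma y)⁻¹ * deriv Real.Gamma y) y :=
      (Real.hasDerivAt_log hΓ1.ne').comp y hd1
    have hl2 : HasDerivAt (fun z : ℝ => Real.log (Real.Gamma (K - z)))
        ((Real.Gamma (K - y))⁻¹ * (deriv Real.Gamma (K - y) * (-1))) y :=
      by have := (Real.hasDerivAt_log hΓ2.ne').comp y hc2; exact this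
    have := hl1.fun_add hl2
    refine this.congr_deriv ?_
    field_simp
    ring
  -- Step 2: via GammaSeq, h has derivative psiSeries K 0 x at x
  obtain ⟨a, b, ha, hb, hx₀, _, hsub2⟩ := ball_subset_aux hx
  set Q : ℕ → ℝ → ℝ := fun n y => K * Real.log n + 2 * Real.log (n.factorial) -
      ∑ i ∈ Finset.range (n + 1), (Real.log (y + i) + Real.log (K - y + i)) with hQ
  have hQderiv : ∀ n : ℕ, ∀ y ∈ Ioo a b,
      HasDerivAt (Q n) (∑ i ∈ Finset.range (n + 1), psiTerm K 0 i y) y := by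
    intro n y hy
    have hy' := hsub2 hy
    have hy0 : 0 < y := hy'.1
    have hyK : 0 < K - y := by linarith [hy'.2]
    have hsum : HasDerivAt (fun z : ℝ => ∑ i ∈ Finset.range (n + 1),
        (Real.log (z + i) + Real.log (K - z + i)))
        (∑ i ∈ Finset.range (n + 1), ((y + i)⁻¹ - (K - y + i)⁻¹)) y := by
      refine HasDerivAt.fun_sum fun i _ => ?_
      have hi : (0:ℝ) ≤ i := Nat.cast_nonneg i
      have hB : (0:ℝ) < y + i := by linarith
      have hA : (0:ℝ) < K - y + i := by linarith
      have d1 : HasDerivAt (fun z : ℝ => z + (i:ℝ)) 1 y := by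
        simpa using (hasDerivAt_id y).add_const (i:ℝ)
      have d2 : HasDerivAt (fun z : ℝ => K - z + (i:ℝ)) (-1) y := by
        simpa using ((hasDerivAt_id y).const_sub K).add_const (i:ℝ)
      have l1 : HasDerivAt (fun z : ℝ => Real.log (z + i)) ((y + i)⁻¹ * 1) y :=
        by have := (Real.hasDerivAt_log hB.ne').comp y d1; exact this
      have l2 : HasDerivAt (fun z : ℝ => Real.log (K - z + i)) ((K - y + i)⁻¹ * (-1)) y :=
        by have := (Real.hasDerivAt_log hA.ne').comp y d2; exact this
      convert l1.fun_add l2 using 1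
      ring
    have := ((hasDerivAt_const y (K * Real.log n + 2 * Real.log (n.factorial))).fun_sub hsum)
    refine this.congr_deriv ?_
    rw [zero_sub, ← Finset.sum_neg_distrib]
    refine Finset.sum_congr rfl fun i _ => ?_
    simp only [psiTerm, Nat.factorial_zero, Nat.cast_one, pow_zero, pow_one, one_mul, one_div]
    ring
  have hQtendsto : ∀ y ∈ Ioo a b, Tendsto (fun n => Q n y) atTop (𝓝 (h y)) := by
    intro y hy
    have hy' := hsub2 hy
    have hy0 : 0 < y := hy'.1
    have hyK : 0 < K - y := by linarith [hy'.2]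
    have hΓ1 : 0 < Real.Gamma y := Real.Gamma_pos_of_pos hy0
    have hΓ2 : 0 < Real.Gamma (K - y) := Real.Gamma_pos_of_pos hyK
    have t1 : Tendsto (fun n => Real.log (Real.GammaSeq y n)) atTop (𝓝 (Real.log (Real.Gamma y))) :=
      ((Real.continuousAt_log hΓ1.ne').tendsto).comp (Real.GammaSeq_tendsto_Gamma y)
    have t2 : Tendsto (fun n => Real.log (Real.GammaSeq (K - y) n)) atTop
        (𝓝 (Real.log (Real.Gamma (K - y)))) :=
      ((Real.continuousAt_log hΓ2.ne').tendsto).comp (Real.GammaSeq_tendsto_Gamma (K - y))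
    have t3 := t1.add t2
    refine t3.congr' ?_
    filter_upwards [eventually_ge_atTop 1] with n hn
    rw [log_GammaSeq hy0 hn, log_GammaSeq hyK hn]
    simp only [hQ, Finset.sum_add_distrib]
    ring
  -- apply uniform limit theorem
  have step2 : HasDerivAt h (psiSeries K 0 x) x := by
    have huc : TendstoUniformlyOn (fun n x => ∑ i ∈ Finset.range (n + 1), psiTerm K 0 i x)
        (psiSeries K 0) atTop (Ioo a b) := by
      have base := tendstoUniformlyOn_psiPartial (K := K) ha hb 0
      intro u hu
      exact (tendsto_add_atTop_nat 1).eventually (base u hu)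
    exact hasDerivAt_of_tendstoUniformlyOn (f := Q) isOpen_Ioo huc
      (Eventually.of_forall fun n y hy => hQderiv n y hy) hQtendsto hx₀
  exact (step1 x hx).unique step2

lemma iteratedDeriv_psi_eq_series {K : ℝ} (j : ℕ) {x : ℝ} (hx : x ∈ Ioo 0 K) :
    iteratedDeriv j (fun x : ℝ => deriv Real.Gamma x / Real.Gamma x -
        deriv Real.Gamma (K - x) / Real.Gamma (K - x)) x = psiSeries K j x := by
  induction j generalizing x with
  | zero => simpa using psi_eq_series hx
  | succ j ih =>
    rw [iteratedDeriv_succ]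
    have hev : (iteratedDeriv j (fun x : ℝ => deriv Real.Gamma x / Real.Gamma x -
        deriv Real.Gamma (K - x) / Real.Gamma (K - x))) =ᶠ[𝓝 x] psiSeries K j :=
      eventually_of_mem (isOpen_Ioo.mem_nhds hx) (fun y hy => ih hy)
    rw [hev.deriv_eq, (hasDerivAt_psiSeries hx j).deriv]

lemma neg_one_pow_le_one (j : ℕ) : ((-1 : ℝ) ^ j) ≤ 1 := by
  rcases Nat.even_or_odd j with h | h
  · rw [h.neg_one_pow]
  · rw [h.neg_one_pow]; norm_num

lemma psiTerm_nonneg {K : ℝ} (j i : ℕ) {s : ℝ} (h1 : K / 2 ≤ s) (h2 : s < K) :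
    0 ≤ psiTerm K j i s := by
  have hi : (0:ℝ) ≤ i := Nat.cast_nonneg i
  have hK : 0 < K := by linarith
  have hA : (0:ℝ) < K - s + i := by linarith
  have hB : (0:ℝ) < s + i := by linarith
  have hAB : K - s + i ≤ s + i := by linarith
  have key : (-1 : ℝ) ^ j / (s + i) ^ (j + 1) ≤ 1 / (K - s + i) ^ (j + 1) := by
    calc (-1 : ℝ) ^ j / (s + i) ^ (j + 1) ≤ 1 / (s + i) ^ (j + 1) := by
          exact div_le_div_of_nonneg_right (neg_one_pow_le_one j) (by positivity)
      _ ≤ 1 / (K - s + i) ^ (j + 1) :=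
          one_div_le_one_div_of_le (by positivity) (pow_le_pow_left₀ hA.le hAB _)
  have : (0:ℝ) ≤ (j.factorial : ℝ) := by positivity
  apply mul_nonneg this
  linarith

lemma psiTerm_zero_pos {K : ℝ} (j : ℕ) {s : ℝ} (h1 : K / 2 < s) (h2 : s < K) :
    0 < psiTerm K j 0 s := by
  have hK : 0 < K := by linarith
  have hA : (0:ℝ) < K - s := by linarith
  have hB : (0:ℝ) < s := by linarith
  have hAB : K - s < s := by linarith
  have key : (-1 : ℝ) ^ j / (s + (0:ℕ)) ^ (j + 1) < 1 / (K - s + (0:ℕ)) ^ (j + 1) := by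
    push_cast
    rw [add_zero, add_zero]
    calc (-1 : ℝ) ^ j / s ^ (j + 1) ≤ 1 / s ^ (j + 1) := by
          exact div_le_div_of_nonneg_right (neg_one_pow_le_one j) (by positivity)
      _ < 1 / (K - s) ^ (j + 1) :=
          one_div_lt_one_div_of_lt (by positivity) (pow_lt_pow_left₀ hAB hA.le (by omega))
  have hf : (0:ℝ) < (j.factorial : ℝ) := by exact_mod_cast j.factorial_pos
  apply mul_pos hf
  rw [sub_pos]
  exact key

lemma psiSeries_pos {K : ℝ} (j : ℕ) {s : ℝ} (h1 : K / 2 < s) (h2 : s < K) :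
    0 < psiSeries K j s := by
  have hs0 : 0 < s := lt_of_le_of_lt (by linarith) h1
  exact Summable.tsum_pos (summable_psiTerm ⟨hs0, h2⟩ j) (fun i => psiTerm_nonneg j i h1.le h2) 0
    (psiTerm_zero_pos j h1 h2)

lemma psiSeries_nonneg {K : ℝ} (j : ℕ) {s : ℝ} (h1 : K / 2 ≤ s) (h2 : s < K) :
    0 ≤ psiSeries K j s :=
  tsum_nonneg (fun i => psiTerm_nonneg j i h1 h2)

/-- For an even integer `k ≥ 4` and `j ≥ 0`, the function
`Ψ = iteratedDeriv j (x ↦ Γ'(x)/Γ(x) − Γ'(k−x)/Γ(k−x))` (the function `Ψ_{j+1}` of the paper)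
is positive on `(k/2, k−2]`, nonnegative at `k/2`, and strictly increasing on `[k/2, k−2]`. -/

theorem psi_pos_and_strictMonoOn
    (k : ℕ) (hk : Even k) (hk4 : 4 ≤ k) (j : ℕ)
    (Ψ : ℝ → ℝ)
    (hΨ : Ψ = iteratedDeriv j
      (fun x : ℝ => deriv Real.Gamma x / Real.Gamma x -
        deriv Real.Gamma ((k : ℝ) - x) / Real.Gamma ((k : ℝ) - x))) :
    (∀ s : ℝ, (k : ℝ) / 2 < s → s ≤ (k : ℝ) - 2 → 0 < Ψ s) ∧
      0 ≤ Ψ ((k : ℝ) / 2) ∧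
      StrictMonoOn Ψ (Set.Icc ((k : ℝ) / 2) ((k : ℝ) - 2)) := by
  set K : ℝ := (k : ℝ) with hKdef
  have hK4 : (4 : ℝ) ≤ K := by rw [hKdef]; exact_mod_cast hk4
  have hmem : ∀ s : ℝ, K / 2 ≤ s → s ≤ K - 2 → s ∈ Ioo (0 : ℝ) K :=
    fun s h1 h2 => ⟨by linarith, by linarith⟩
  have hΨeq : ∀ s ∈ Ioo (0 : ℝ) K, Ψ s = psiSeries K j s := by
    intro s hs; rw [hΨ]; exact iteratedDeriv_psi_eq_series j hs
  refine ⟨?_, ?_, ?_⟩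
  · intro s h1 h2
    rw [hΨeq s (hmem s h1.le h2)]
    exact psiSeries_pos j h1 (by linarith)
  · rw [hΨeq _ (hmem _ le_rfl (by linarith))]
    exact psiSeries_nonneg j le_rfl (by linarith)
  · have hsub : Icc (K / 2) (K - 2) ⊆ Ioo (0 : ℝ) K := fun s hs => hmem s hs.1 hs.2
    refine strictMonoOn_of_deriv_pos (convex_Icc _ _) ?_ ?_
    · intro x hx
      have hx' := hsub hx
      have hev : Ψ =ᶠ[𝓝 x] psiSeries K j :=
        eventually_of_mem (isOpen_Ioo.mem_nhds hx') (fun y hy => hΨeq y hy)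
      exact ((hasDerivAt_psiSeries hx' j).continuousAt.congr hev.symm).continuousWithinAt
    · intro x hx
      rw [interior_Icc] at hx
      have hx' : x ∈ Ioo (0 : ℝ) K := hmem x hx.1.le hx.2.le
      have hev : Ψ =ᶠ[𝓝 x] psiSeries K j :=
        eventually_of_mem (isOpen_Ioo.mem_nhds hx') (fun y hy => hΨeq y hy)
      rw [hev.deriv_eq, (hasDerivAt_psiSeries hx' j).deriv]
      exact psiSeries_pos (j + 1) hx.1 (by linarith [hx.2])
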